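/- Let p be a prime, m ≥ 1, and k = (k_0,...,k_d) natural numbers with Σ_j k_j = m and Σ_j j·k_j = m−1. Then the p-adic valuation of (m−1)!/ (k_0!⋯k_d!) is nonnegative, i.e. ν_p((m−1)!) ≥ Σ_j ν_p(k_j!). -/
import Mathlib

private lemma fact_prod_dvd {n : ℕ} (d : ℕ) (g : Fin (d + 1) → ℕ)
    (hs : ∑ i, g i = n) : ∏ i, (g i).factorial ∣ n.factorial := by
  rw [← hs]; exact Nat.prod_factorial_dvd_factorial_sum _ _

private lemma sum_factorization_le {n : ℕ} (p d : ℕ) (g : Fin (d + 1) → ℕ)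
    (hs : ∑ i, g i = n) :
    ∑ i, ((g i).factorial.factorization p) ≤ n.factorial.factorization p := by
  have hdvd := fact_prod_dvd d g hs
  have h := (Nat.factorization_le_iff_dvd
    (Finset.prod_ne_zero_iff.2 fun i _ => (Nat.factorial_pos _).ne')
    (Nat.factorial_pos n).ne').2 hdvd
  have hprod : (∏ i, (g i).factorial).factorization p
      = ∑ i, ((g i).factorial.factorization p) := by
    rw [Nat.factorization_prod fun i _ => (Nat.factorial_pos _).ne']
    simp [Finsupp.finset_sum_apply]
  rw [← hprod]
  exact h p

/-- Let `p` be a prime, `m ≥ 1`, and `k = (k_0, …, k_d)` natural numbers with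
`∑ k_j = m` and `∑ j·k_j = m - 1`.  Then the `p`-adic valuation of
`(m-1)!/(k_0! ⋯ k_d!)` is nonnegative, i.e. `ν_p((m-1)!) ≥ ∑_j ν_p(k_j!)`. -/
theorem factorization_factorial_pred_ge (p : ℕ) (hp : p.Prime) (m d : ℕ) (hm : 1 ≤ m)
    (k : Fin (d + 1) → ℕ)
    (h1 : ∑ j, k j = m) (h2 : ∑ j : Fin (d + 1), (j : ℕ) * k j = m - 1) :
    ∑ j, ((k j).factorial.factorization p) ≤ (m - 1).factorial.factorization p := by
  by_cases hpm : p ∣ m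
  · -- find j with ¬ p ∣ k j
    have hj : ∃ j, ¬ p ∣ k j := by
      by_contra h
      push_neg at h
      have hd1 : p ∣ m - 1 := h2 ▸ Finset.dvd_sum fun j _ => (h j).mul_left _
      have : p ∣ 1 := by
        have := Nat.dvd_sub hpm hd1
        rwa [Nat.sub_sub_self hm] at this
      exact hp.one_lt.ne' (Nat.dvd_one.mp this)
    obtain ⟨j, hj⟩ := hj
    have hkj : k j ≠ 0 := fun h => hj (h ▸ dvd_zero p)
    set g : Fin (d + 1) → ℕ := Function.update k j (k j - 1) with hg
    have hsum : ∑ i, g i = m - 1 := by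
      rw [hg, Finset.sum_update_of_mem (Finset.mem_univ j)]
      have := Finset.sum_eq_add_sum_sdiff_singleton_of_mem (Finset.mem_univ j) k
      omega
    have hle := sum_factorization_le p d g hsum
    have heq : ∀ i, ((g i).factorial.factorization p)
        = ((k i).factorial.factorization p) := by
      intro i
      by_cases hij : i = j
      · subst hij
        have hk : k i = (k i - 1) + 1 := (Nat.succ_pred_eq_of_pos (Nat.pos_of_ne_zero hkj)).symm
        have : (k i).factorial = k i * (k i - 1).factorial := by
          conv_lhs => rw [hk, Nat.factorial_succ, ← hk]
        rw [hg, Function.update_self, this,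
          Nat.factorization_mul hkj (Nat.factorial_pos _).ne', Finsupp.add_apply,
          Nat.factorization_eq_zero_of_not_dvd hj, zero_add]
      · rw [hg, Function.update_of_ne hij]
    calc ∑ i, ((k i).factorial.factorization p)
        = ∑ i, ((g i).factorial.factorization p) := by
          exact Finset.sum_congr rfl fun i _ => (heq i).symm
      _ ≤ _ := hle
  · have hle := sum_factorization_le p d k h1
    have hm' : m = (m - 1) + 1 := (Nat.succ_pred_eq_of_pos hm).symm
    have hfac : m.factorial = m * (m - 1).factorial := by
      conv_lhs => rw [hm', Nat.factorial_succ, ← hm']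
    rw [hfac, Nat.factorization_mul (by omega) (Nat.factorial_pos _).ne',
      Finsupp.add_apply, Nat.factorization_eq_zero_of_not_dvd hpm, zero_add] at hle
    exact hle
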